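/- Let φ : X × Y → ℝ be convex-concave and let z_0, ..., z_N be points in Z = X × Y with z̄_N = (1/(N+1)) ∑_{k=0}^N z_k. Then the saddle-point gap satisfies max_{y'∈Y} φ(x̄_N, y') − min_{x'∈X} φ(x', ȳ_N) ≤ max_{u∈Z} (1/(N+1)) ∑_{k=0}^N ⟨G(z_k), z_k − u⟩, where G(z) = (∇_x φ(z), −∇_y φ(z)). -/

import Mathlib

open RealInnerProductSpace

lemma grad_ineq {n : ℕ} {f : EuclideanSpace ℝ (Fin n) → ℝ}
    (hf : ConvexOn ℝ Set.univ f) (hd : Differentiable ℝ f)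
    (x y : EuclideanSpace ℝ (Fin n)) :
    f x + ⟪gradient f x, y - x⟫ ≤ f y := by
  set v := y - x with hv
  have hline : HasDerivAt (fun t : ℝ => x + t • v) v 0 := by
    simpa using ((hasDerivAt_id (0:ℝ)).smul_const v).const_add x
  have hF : HasFDerivAt f ((InnerProductSpace.toDual ℝ _) (gradient f x)) (x + (0:ℝ) • v) := by
    simpa using (hasGradientAt_iff_hasFDerivAt).1 (hd x).hasGradientAt
  have hcomp : HasDerivAt (fun t : ℝ => f (x + t • v)) ⟪gradient f x, v⟫ 0 := by
    simpa [Function.comp_def] using hF.comp_hasDerivAt (x := (0:ℝ)) hline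
  have hgc : ConvexOn ℝ Set.univ (fun t : ℝ => f (x + t • v)) := by
    have := hf.comp_affineMap
      (AffineMap.const ℝ ℝ x + (LinearMap.toAffineMap (LinearMap.toSpanSingleton ℝ _ v)))
    simpa [Function.comp_def, Pi.add_apply, LinearMap.toSpanSingleton_apply] using this
  have h := hgc.le_slope_of_hasDerivAt (Set.mem_univ 0) (Set.mem_univ 1) zero_lt_one hcomp
  simp only [slope_def_field, zero_smul, add_zero, one_smul, sub_zero, div_one] at h
  have h2 : x + v = y := by rw [hv]; abel
  rw [h2] at h
  linarith

lemma grad_ineq_concave {n : ℕ} {f : EuclideanSpace ℝ (Fin n) → ℝ}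
    (hf : ConcaveOn ℝ Set.univ f) (hd : Differentiable ℝ f)
    (x y : EuclideanSpace ℝ (Fin n)) :
    f y ≤ f x + ⟪gradient f x, y - x⟫ := by
  have hneg : ConvexOn ℝ Set.univ (fun z => -(f z)) := hf.neg
  have hdneg : Differentiable ℝ (fun z => -(f z)) := hd.neg
  have hgrad : gradient (fun z => -(f z)) x = -(gradient f x) := by
    have hF : HasFDerivAt f ((InnerProductSpace.toDual ℝ _) (gradient f x)) x :=
      (hasGradientAt_iff_hasFDerivAt).1 (hd x).hasGradientAt
    have : HasGradientAt (fun z => -(f z)) (-(gradient f x)) x :=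
      (hasGradientAt_iff_hasFDerivAt).2 (hF.neg.congr_fderiv (map_neg _ _).symm)
    exact this.gradient
  have := grad_ineq hneg hdneg x y
  rw [hgrad] at this
  simp only [inner_neg_left] at this
  linarith


/-- For a differentiable convex-concave function `φ` on `Z = X × Y` (compact convex
nonempty), iterates `z_k = (zx k, zy k) ∈ Z`, `k = 0, …, N`, and their averages
`x̄_N, ȳ_N`, the saddle-point gap satisfies
`max_{y'∈Y} φ(x̄_N, y') − min_{x'∈X} φ(x', ȳ_N)
   ≤ max_{u∈Z} (1/(N+1)) ∑_{k=0}^N ⟨G(z_k), z_k − u⟩`,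
where `G(z) = (∇_x φ(z), −∇_y φ(z))`. -/
theorem saddle_gap_le_sup_average_linearization (nx ny N : ℕ)
    (X : Set (EuclideanSpace ℝ (Fin nx))) (Y : Set (EuclideanSpace ℝ (Fin ny)))
    (hXc : IsCompact X) (hYc : IsCompact Y) (hX : Convex ℝ X) (hY : Convex ℝ Y)
    (hXne : X.Nonempty) (hYne : Y.Nonempty)
    (φ : EuclideanSpace ℝ (Fin nx) → EuclideanSpace ℝ (Fin ny) → ℝ)
    (hdx : ∀ y, Differentiable ℝ fun x => φ x y)
    (hdy : ∀ x, Differentiable ℝ fun y => φ x y)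
    (hconv : ∀ y, ConvexOn ℝ Set.univ fun x => φ x y)
    (hconc : ∀ x, ConcaveOn ℝ Set.univ fun y => φ x y)
    (zx : ℕ → EuclideanSpace ℝ (Fin nx)) (zy : ℕ → EuclideanSpace ℝ (Fin ny))
    (hzx : ∀ k ≤ N, zx k ∈ X) (hzy : ∀ k ≤ N, zy k ∈ Y)
    (xbar : EuclideanSpace ℝ (Fin nx)) (ybar : EuclideanSpace ℝ (Fin ny))
    (hxbar : xbar = ((N : ℝ) + 1)⁻¹ • ∑ k ∈ Finset.range (N + 1), zx k)
    (hybar : ybar = ((N : ℝ) + 1)⁻¹ • ∑ k ∈ Finset.range (N + 1), zy k) :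
    sSup ((fun y' => φ xbar y') '' Y) - sInf ((fun x' => φ x' ybar) '' X) ≤
      sSup ((fun u : EuclideanSpace ℝ (Fin nx) × EuclideanSpace ℝ (Fin ny) =>
        ((N : ℝ) + 1)⁻¹ * ∑ k ∈ Finset.range (N + 1),
          (⟪gradient (fun x => φ x (zy k)) (zx k), zx k - u.1⟫
            - ⟪gradient (fun y => φ (zx k) y) (zy k), zy k - u.2⟫)) '' (X ×ˢ Y)) := by
  set F : EuclideanSpace ℝ (Fin nx) × EuclideanSpace ℝ (Fin ny) → ℝ :=
    fun u => ((N : ℝ) + 1)⁻¹ * ∑ k ∈ Finset.range (N + 1),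
      (⟪gradient (fun x => φ x (zy k)) (zx k), zx k - u.1⟫
        - ⟪gradient (fun y => φ (zx k) y) (zy k), zy k - u.2⟫) with hF
  have hNpos : (0:ℝ) < (N : ℝ) + 1 := by positivity
  have hwsum : ∑ _k ∈ Finset.range (N + 1), ((N : ℝ) + 1)⁻¹ = 1 := by
    simp [Finset.sum_const, mul_comm]
    field_simp
  -- continuity and boundedness of F on X ×ˢ Y
  have hFcont : Continuous F := by
    apply Continuous.mul continuous_const
    apply continuous_finset_sum
    intro k _
    exact ((Continuous.inner continuous_const (continuous_const.sub continuous_fst)).sub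
      (Continuous.inner continuous_const (continuous_const.sub continuous_snd)))
  have hCbdd : BddAbove (F '' (X ×ˢ Y)) :=
    ((hXc.prod hYc).image hFcont).bddAbove
  -- key pointwise inequality
  have key : ∀ x' ∈ X, ∀ y' ∈ Y, φ xbar y' - φ x' ybar ≤ F (x', y') := by
    intro x' hx' y' hy'
    -- Jensen in x
    have jx : φ xbar y' ≤ ∑ k ∈ Finset.range (N + 1), ((N : ℝ) + 1)⁻¹ • φ (zx k) y' := by
      have := (hconv y').map_sum_le (t := Finset.range (N+1))
        (w := fun _ => ((N : ℝ) + 1)⁻¹) (p := zx)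
        (fun i _ => by positivity) hwsum (fun i _ => Set.mem_univ _)
      rwa [← Finset.smul_sum, ← hxbar] at this
    have jy : ∑ k ∈ Finset.range (N + 1), ((N : ℝ) + 1)⁻¹ • φ x' (zy k) ≤ φ x' ybar := by
      have := (hconc x').le_map_sum (t := Finset.range (N+1))
        (w := fun _ => ((N : ℝ) + 1)⁻¹) (p := zy)
        (fun i _ => by positivity) hwsum (fun i _ => Set.mem_univ _)
      rw [hybar]
      simpa [← Finset.smul_sum] using this
    -- per-term gradient inequalities
    have term : ∀ k ∈ Finset.range (N + 1),
        φ (zx k) y' - φ x' (zy k) ≤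
          ⟪gradient (fun x => φ x (zy k)) (zx k), zx k - x'⟫
            - ⟪gradient (fun y => φ (zx k) y) (zy k), zy k - y'⟫ := by
      intro k _
      have h1 := grad_ineq (hconv (zy k)) (hdx (zy k)) (zx k) x'
      have h2 := grad_ineq_concave (hconc (zx k)) (hdy (zx k)) (zy k) y'
      have e1 : ⟪gradient (fun x => φ x (zy k)) (zx k), x' - zx k⟫
          = -⟪gradient (fun x => φ x (zy k)) (zx k), zx k - x'⟫ := by
        rw [← inner_neg_right]; congr 1; abel
      have e2 : ⟪gradient (fun y => φ (zx k) y) (zy k), y' - zy k⟫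
          = -⟪gradient (fun y => φ (zx k) y) (zy k), zy k - y'⟫ := by
        rw [← inner_neg_right]; congr 1; abel
      rw [e1] at h1; rw [e2] at h2
      linarith
    calc φ xbar y' - φ x' ybar
        ≤ (∑ k ∈ Finset.range (N + 1), ((N : ℝ) + 1)⁻¹ • φ (zx k) y')
          - ∑ k ∈ Finset.range (N + 1), ((N : ℝ) + 1)⁻¹ • φ x' (zy k) := by linarith
      _ = ((N : ℝ) + 1)⁻¹ * ∑ k ∈ Finset.range (N + 1), (φ (zx k) y' - φ x' (zy k)) := by
          rw [← Finset.sum_sub_distrib, Finset.mul_sum]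
          congr 1; ext k; simp [smul_eq_mul]; ring
      _ ≤ F (x', y') := by
          rw [hF]
          apply mul_le_mul_of_nonneg_left _ (by positivity)
          exact Finset.sum_le_sum term
  -- nonemptiness
  have hAne : ((fun y' => φ xbar y') '' Y).Nonempty := hYne.image _
  have hBne : ((fun x' => φ x' ybar) '' X).Nonempty := hXne.image _
  rw [sub_le_iff_le_add]
  apply csSup_le hAne
  rintro a ⟨y', hy', rfl⟩
  show φ xbar y' ≤ _
  have h3 : φ xbar y' - sSup (F '' (X ×ˢ Y)) ≤ sInf ((fun x' => φ x' ybar) '' X) := by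
    apply le_csInf hBne
    rintro b ⟨x', hx', rfl⟩
    show _ ≤ φ x' ybar
    have h4 := le_csSup hCbdd (⟨(x', y'), Set.mk_mem_prod hx' hy', rfl⟩ :
      F (x', y') ∈ F '' (X ×ˢ Y))
    have h5 := key x' hx' y' hy'
    linarith
  linarith
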